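/- (Main Lemma) Let X₁, …, X_k be subspaces of a finite-dimensional vector space over a field F such that for every subset I ⊆ [k], dim(Σ_{i∈I} Xᵢ) + dim(Σ_{i∉I} Xᵢ) - dim(X₁ + ⋯ + X_k) ≤ r. Then there exists a subspace A of dimension at most 3r such that Σ_{i=1}^{k} (dim Xᵢ - dim(Xᵢ ∩ A)) ≤ dim(X₁ + ⋯ + X_k). -/

import Mathlib

open Module Finset

section Stmt4Aux

variable {F V : Type*} [Field F] [AddCommGroup V] [Module F V]
    [FiniteDimensional F V] {k : ℕ}

/-- integer dimension of the span of a sub-collection -/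
noncomputable def fz (X : Fin k → Submodule F V) (S : Finset (Fin k)) : ℤ :=
  finrank F ↥(⨆ i ∈ S, X i)

noncomputable def dz (X : Fin k → Submodule F V) (i : Fin k) : ℤ :=
  finrank F ↥(X i)

noncomputable def wz (X : Fin k → Submodule F V) (i : Fin k) (S : Finset (Fin k)) : ℤ :=
  finrank F ↥(X i ⊓ ⨆ j ∈ S, X j)

/-- internal deficiency of a sub-collection -/
noncomputable def DS (X : Fin k → Submodule F V) (S : Finset (Fin k)) : ℤ :=
  (∑ i ∈ S, dz X i) - fz X S

lemma fz_insert (X : Fin k → Submodule F V) (i : Fin k) (S : Finset (Fin k)) :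
    fz X (insert i S) = dz X i + fz X S - wz X i S := by
  have h1 : (⨆ j ∈ insert i S, X j) = X i ⊔ ⨆ j ∈ S, X j := Finset.iSup_insert i S X
  have h2 := Submodule.finrank_sup_add_finrank_inf_eq (X i) (⨆ j ∈ S, X j)
  unfold fz dz wz
  rw [h1]
  omega

lemma DS_insert (X : Fin k → Submodule F V) {i : Fin k} {S : Finset (Fin k)} (hi : i ∉ S) :
    DS X (insert i S) = DS X S + wz X i S := by
  unfold DS
  rw [Finset.sum_insert hi, fz_insert X i S]
  ring

lemma biSup_mono' (X : Fin k → Submodule F V) {S T : Finset (Fin k)} (hST : S ⊆ T) :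
    (⨆ j ∈ S, X j) ≤ ⨆ j ∈ T, X j :=
  iSup_le fun j => iSup_le fun hj => le_biSup X (hST hj)

lemma wz_mono (X : Fin k → Submodule F V) (i : Fin k) {S T : Finset (Fin k)} (hST : S ⊆ T) :
    wz X i S ≤ wz X i T := by
  unfold wz
  exact_mod_cast Submodule.finrank_mono (inf_le_inf_left (X i) (biSup_mono' X hST))

/-- telescoping: the internal deficiency of `S` is at most the sum of the
overlaps of each member with the others. -/
lemma chain (X : Fin k → Submodule F V) (S : Finset (Fin k)) :
    DS X S ≤ ∑ i ∈ S, wz X i (S.erase i) := by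
  induction S using Finset.induction_on with
  | empty =>
      have : fz X (∅ : Finset (Fin k)) = 0 := by
        unfold fz
        simp
      unfold DS
      simp [this]
  | @insert a S ha ih =>
      rw [DS_insert X ha, Finset.sum_insert ha, Finset.erase_insert ha]
      have hterm : ∀ i ∈ S, wz X i (S.erase i) ≤ wz X i ((insert a S).erase i) :=
        fun i _ => wz_mono X i (Finset.erase_subset_erase i (Finset.subset_insert a S))
      have := Finset.sum_le_sum hterm
      linarith

/-- exchange inequality at a minimizer of `J ↦ DS J + DS Jᶜ`, inner version -/
lemma exch_in (X : Fin k → Submodule F V) {I : Finset (Fin k)}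
    (hmin : ∀ J, DS X I + DS X Iᶜ ≤ DS X J + DS X Jᶜ)
    {i : Fin k} (hi : i ∈ I) : wz X i (I.erase i) ≤ wz X i Iᶜ := by
  have h1 : DS X I = DS X (I.erase i) + wz X i (I.erase i) := by
    conv_lhs => rw [← Finset.insert_erase hi]
    exact DS_insert X (Finset.notMem_erase i I)
  have h2 : DS X ((I.erase i)ᶜ) = DS X Iᶜ + wz X i Iᶜ := by
    rw [Finset.compl_erase]
    exact DS_insert X (by simp [hi])
  have := hmin (I.erase i)
  omega

/-- exchange inequality at a minimizer, outer version -/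
lemma exch_out (X : Fin k → Submodule F V) {I : Finset (Fin k)}
    (hmin : ∀ J, DS X I + DS X Iᶜ ≤ DS X J + DS X Jᶜ)
    {i : Fin k} (hi : i ∈ Iᶜ) : wz X i (Iᶜ.erase i) ≤ wz X i I := by
  have hiI : i ∉ I := Finset.mem_compl.mp hi
  have h1 : DS X (insert i I) = DS X I + wz X i I := DS_insert X hiI
  have h2 : DS X Iᶜ = DS X (Iᶜ.erase i) + wz X i (Iᶜ.erase i) := by
    conv_lhs => rw [← Finset.insert_erase hi]
    exact DS_insert X (Finset.notMem_erase i Iᶜ)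
  have := hmin (insert i I)
  rw [Finset.compl_insert] at this
  omega

/-- Padding lemma: enlarge `A` one dimension at a time until the defect is absorbed. -/
lemma pad (X : Fin k → Submodule F V) : ∀ (n : ℕ) (A : Submodule F V),
    (∑ i, (dz X i - (finrank F ↥(X i ⊓ A) : ℤ))) ≤ (finrank F ↥(⨆ i, X i) : ℤ) + n →
    ∃ B : Submodule F V, finrank F ↥B ≤ finrank F ↥A + n ∧
      (∑ i, (dz X i - (finrank F ↥(X i ⊓ B) : ℤ))) ≤ (finrank F ↥(⨆ i, X i) : ℤ) := by
  intro n
  induction n with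
  | zero =>
      intro A hA
      exact ⟨A, by omega, by exact_mod_cast hA⟩
  | succ n ih =>
      intro A hA
      by_cases hle : (∑ i, (dz X i - (finrank F ↥(X i ⊓ A) : ℤ))) ≤
          (finrank F ↥(⨆ i, X i) : ℤ)
      · exact ⟨A, by omega, hle⟩
      push_neg at hle
      -- find an index with a positive term
      have hex : ∃ i : Fin k, (finrank F ↥(X i ⊓ A) : ℤ) < dz X i := by
        by_contra hall
        push_neg at hall
        have : (∑ i, (dz X i - (finrank F ↥(X i ⊓ A) : ℤ))) ≤ 0 :=
          Finset.sum_nonpos fun i _ => by have := hall i; omega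
        have h0 : (0 : ℤ) ≤ (finrank F ↥(⨆ i, X i) : ℤ) := Int.ofNat_nonneg _
        omega
      obtain ⟨i, hi⟩ := hex
      have hne : ¬ X i ≤ A := by
        intro hle'
        have : X i ⊓ A = X i := inf_eq_left.mpr hle'
        rw [this] at hi
        unfold dz at hi
        omega
      obtain ⟨v, hvX, hvA⟩ := SetLike.not_le_iff_exists.1 hne
      have hv0 : v ≠ 0 := fun h => hvA (h ▸ A.zero_mem)
      set A' := A ⊔ Submodule.span F {v} with hA'def
      have hvA' : v ∈ A' := Submodule.mem_sup_right (Submodule.mem_span_singleton_self v)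
      have hlt : X i ⊓ A < X i ⊓ A' :=
        (SetLike.lt_iff_le_and_exists (p := X i ⊓ A) (q := X i ⊓ A')).2
          ⟨inf_le_inf_left _ le_sup_left, v, ⟨hvX, hvA'⟩, fun hmem => hvA hmem.2⟩
      have hrk : finrank F ↥(X i ⊓ A) < finrank F ↥(X i ⊓ A') :=
        Submodule.finrank_lt_finrank_of_lt hlt
      have hrkA' : finrank F ↥A' ≤ finrank F ↥A + 1 := by
        have h1 := Submodule.finrank_add_le_finrank_add_finrank A (Submodule.span F {v})
        rw [finrank_span_singleton hv0] at h1
        exact h1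
      have hmono : ∀ j : Fin k, (finrank F ↥(X j ⊓ A) : ℤ) ≤ (finrank F ↥(X j ⊓ A') : ℤ) := by
        intro j
        exact_mod_cast Submodule.finrank_mono (inf_le_inf_left _ le_sup_left)
      have hsum : (∑ j, (dz X j - (finrank F ↥(X j ⊓ A') : ℤ))) <
          (∑ j, (dz X j - (finrank F ↥(X j ⊓ A) : ℤ))) := by
        refine Finset.sum_lt_sum (fun j _ => by have := hmono j; omega)
          ⟨i, Finset.mem_univ i, by have := hrk; omega⟩
      have hA'hyp : (∑ j, (dz X j - (finrank F ↥(X j ⊓ A') : ℤ))) ≤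
          (finrank F ↥(⨆ i, X i) : ℤ) + n := by
        push_cast at hA ⊢
        omega
      obtain ⟨B, hB1, hB2⟩ := ih A' hA'hyp
      exact ⟨B, by omega, hB2⟩


end Stmt4Aux

theorem stmt4 {F V : Type*} [Field F] [AddCommGroup V] [Module F V]
    [FiniteDimensional F V] {k : ℕ} (X : Fin k → Submodule F V) (r : ℕ)
    (h : ∀ I : Finset (Fin k),
      (finrank F ↥(⨆ i ∈ I, X i) : ℤ) + finrank F ↥(⨆ i ∈ Iᶜ, X i)
          - finrank F ↥(⨆ i, X i) ≤ r) :
    ∃ A : Submodule F V, finrank F A ≤ 3 * r ∧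
      ∑ i, ((finrank F ↥(X i) : ℤ) - finrank F ↥(X i ⊓ A))
        ≤ finrank F ↥(⨆ i, X i) := by
  classical
  -- pick a minimizer of the two-sided internal deficiency
  obtain ⟨I, -, hmin'⟩ := Finset.exists_min_image (Finset.univ : Finset (Finset (Fin k)))
    (fun J => DS X J + DS X Jᶜ) ⟨∅, Finset.mem_univ ∅⟩
  have hmin : ∀ J, DS X I + DS X Iᶜ ≤ DS X J + DS X Jᶜ := fun J => hmin' J (Finset.mem_univ J)
  set A₀ : Submodule F V := (⨆ i ∈ I, X i) ⊓ (⨆ i ∈ Iᶜ, X i) with hA₀def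
  -- the two halves span everything
  have hsup : (⨆ i ∈ I, X i) ⊔ (⨆ i ∈ Iᶜ, X i) = ⨆ i, X i := by
    apply le_antisymm
    · exact sup_le (iSup₂_le fun i _ => le_iSup X i) (iSup₂_le fun i _ => le_iSup X i)
    · refine iSup_le fun i => ?_
      by_cases hi : i ∈ I
      · exact le_trans (le_biSup X hi) le_sup_left
      · exact le_trans (le_biSup X (Finset.mem_compl.mpr hi)) le_sup_right
  have key1 : (finrank F ↥A₀ : ℤ) = fz X I + fz X Iᶜ - finrank F ↥(⨆ i, X i) := by
    have h2 := Submodule.finrank_sup_add_finrank_inf_eq (⨆ i ∈ I, X i) (⨆ i ∈ Iᶜ, X i)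
    rw [hsup] at h2
    rw [hA₀def]
    unfold fz
    omega
  have key2 : (finrank F ↥A₀ : ℤ) ≤ r := by
    rw [key1]
    exact h I
  -- capture: A₀ meets each Xᵢ in the full cross-overlap
  have hcapI : ∀ i ∈ I, (finrank F ↥(X i ⊓ A₀) : ℤ) = wz X i Iᶜ := by
    intro i hi
    have hXi : X i ⊓ A₀ = X i ⊓ ⨆ j ∈ Iᶜ, X j := by
      apply le_antisymm
      · exact inf_le_inf_left _ inf_le_right
      · exact le_inf inf_le_left
          (le_inf (le_trans inf_le_left (le_biSup X hi)) inf_le_right)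
    rw [hXi]
    rfl
  have hcapO : ∀ i ∈ Iᶜ, (finrank F ↥(X i ⊓ A₀) : ℤ) = wz X i I := by
    intro i hi
    have hXi : X i ⊓ A₀ = X i ⊓ ⨆ j ∈ I, X j := by
      apply le_antisymm
      · exact inf_le_inf_left _ inf_le_left
      · exact le_inf inf_le_left
          (le_inf inf_le_right (le_trans inf_le_left (le_biSup X hi)))
    rw [hXi]
    rfl
  -- total capture is at least the total internal deficiency of the two halves
  have hcapture : DS X I + DS X Iᶜ ≤ ∑ i, (finrank F ↥(X i ⊓ A₀) : ℤ) := by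
    have hsplit : ∑ i ∈ I, (finrank F ↥(X i ⊓ A₀) : ℤ)
        + ∑ i ∈ Iᶜ, (finrank F ↥(X i ⊓ A₀) : ℤ)
        = ∑ i, (finrank F ↥(X i ⊓ A₀) : ℤ) := Finset.sum_add_sum_compl I _
    have hI : DS X I ≤ ∑ i ∈ I, (finrank F ↥(X i ⊓ A₀) : ℤ) := by
      calc DS X I ≤ ∑ i ∈ I, wz X i (I.erase i) := chain X I
        _ ≤ ∑ i ∈ I, wz X i Iᶜ := Finset.sum_le_sum fun i hi => exch_in X hmin hi
        _ = ∑ i ∈ I, (finrank F ↥(X i ⊓ A₀) : ℤ) :=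
            (Finset.sum_congr rfl fun i hi => (hcapI i hi).symm)
    have hO : DS X Iᶜ ≤ ∑ i ∈ Iᶜ, (finrank F ↥(X i ⊓ A₀) : ℤ) := by
      calc DS X Iᶜ ≤ ∑ i ∈ Iᶜ, wz X i (Iᶜ.erase i) := chain X Iᶜ
        _ ≤ ∑ i ∈ Iᶜ, wz X i I := Finset.sum_le_sum fun i hi => exch_out X hmin hi
        _ = ∑ i ∈ Iᶜ, (finrank F ↥(X i ⊓ A₀) : ℤ) :=
            (Finset.sum_congr rfl fun i hi => (hcapO i hi).symm)
    omega
  -- hence the defect of A₀ is at most finrank(⨆ i, X i) + finrank A₀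
  have hdsum : ∑ i ∈ I, dz X i + ∑ i ∈ Iᶜ, dz X i = ∑ i, dz X i :=
    Finset.sum_add_sum_compl I _
  have hDD : DS X I + DS X Iᶜ = ∑ i, dz X i - (fz X I + fz X Iᶜ) := by
    unfold DS
    omega
  have hsA₀ : (∑ i, (dz X i - (finrank F ↥(X i ⊓ A₀) : ℤ)))
      ≤ (finrank F ↥(⨆ i, X i) : ℤ) + (finrank F ↥A₀ : ℕ) := by
    have hdist : (∑ i, (dz X i - (finrank F ↥(X i ⊓ A₀) : ℤ)))
        = ∑ i, dz X i - ∑ i, (finrank F ↥(X i ⊓ A₀) : ℤ) := Finset.sum_sub_distrib _ _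
    rw [hdist]
    omega
  -- pad A₀
  obtain ⟨B, hB1, hB2⟩ := pad X (finrank F ↥A₀) A₀ hsA₀
  refine ⟨B, ?_, ?_⟩
  · have hAr : finrank F ↥A₀ ≤ r := by exact_mod_cast key2
    omega
  · exact hB2
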